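/- For λ > −1, t ∈ ℝ and integer m ≥ 2, let P_n(x;λ) denote the monic orthogonal polynomials of the generalised higher order Freud weight ω(x;t,λ) and β_n(λ) their recurrence coefficients. Then for every n ≥ 1: (i) x P_{2n}(x;λ+1) = P_{2n+1}(x;λ) as polynomials in x, and (ii) x² P_{2n−1}(x;λ+1) = x P_{2n}(x;λ) − ( β_{2n}(λ) + P_{2n+1}′(0;λ)/P_{2n−1}′(0;λ) ) P_{2n−1}(x;λ), where P_{2n−1}′(0;λ) ≠ 0. -/

import Mathlib

open MeasureTheory Real Polynomial Filter Set

noncomputable def freudWeight (m : ℕ) (lam t x : ℝ) : ℝ :=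
  |x| ^ (2 * lam + 1) * Real.exp (t * x ^ 2 - x ^ (2 * m))

section Aux
variable {m : ℕ} {t lam : ℝ}

lemma freud_nonneg (x : ℝ) : 0 ≤ freudWeight m lam t x :=
  mul_nonneg (Real.rpow_nonneg (abs_nonneg x) _) (Real.exp_pos _).le

lemma freud_pos {x : ℝ} (hx : x ≠ 0) : 0 < freudWeight m lam t x :=
  mul_pos (Real.rpow_pos_of_pos (abs_pos.2 hx) _) (Real.exp_pos _)

lemma freud_even (x : ℝ) : freudWeight m lam t (-x) = freudWeight m lam t x := by
  simp [freudWeight, Even.neg_pow (even_two_mul m), neg_sq]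

lemma freud_shift (hlam : -1 < lam) (x : ℝ) : freudWeight m (lam + 1) t x = x ^ 2 * freudWeight m lam t x := by
  unfold freudWeight
  rcases eq_or_ne x 0 with rfl | hx
  · rw [abs_zero, Real.zero_rpow (by linarith : 2 * (lam + 1) + 1 ≠ 0)]
    ring
  · have h1 : (0:ℝ) < |x| := abs_pos.2 hx
    have : 2 * (lam + 1) + 1 = (2 * lam + 1) + 2 := by ring
    rw [this, Real.rpow_add h1, Real.rpow_two, sq_abs]
    ring

/-- A polynomial times `exp (t x² − ½ x^{2m})` is bounded (m ≥ 2). -/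
lemma bdd_factor (hm : 2 ≤ m) (q : Polynomial ℝ) :
    ∃ C : ℝ, ∀ x : ℝ, |q.eval x * Real.exp (t * x ^ 2 - (1/2) * x ^ (2*m))| ≤ C := by
  -- tail bound helper for atTop
  have tail : ∀ r : Polynomial ℝ, ∃ R : ℝ, 1 ≤ R ∧ ∀ x : ℝ, R ≤ x →
      |r.eval x * Real.exp (t * x ^ 2 - (1/2) * x ^ (2*m))| ≤ 1 := by
    intro r
    have h1 : Tendsto (fun x : ℝ => |r.eval x| * Real.exp (-x)) atTop (nhds 0) := by
      have := (r.tendsto_div_exp_atTop).abs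
      simp only [abs_zero] at this
      refine this.congr (fun x => ?_)
      rw [abs_div, Real.exp_neg, div_eq_mul_inv, abs_of_pos (Real.exp_pos x)]
    have h2 : ∀ᶠ x : ℝ in atTop, |r.eval x| * Real.exp (-x) ≤ 1 := by
      filter_upwards [h1.eventually (eventually_le_nhds (by norm_num : (0:ℝ) < 1))] with x hx
      exact hx
    rw [eventually_atTop] at h2
    obtain ⟨R0, hR0⟩ := h2
    refine ⟨max 1 (max R0 (2 * (|t| + 1))), le_max_left _ _, fun x hx => ?_⟩
    have hx1 : (1:ℝ) ≤ x := le_trans (le_max_left _ _) hx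
    have hxR0 : R0 ≤ x := le_trans (le_trans (le_max_left _ _) (le_max_right _ _)) hx
    have hxt : 2 * (|t| + 1) ≤ x := le_trans (le_trans (le_max_right _ _) (le_max_right _ _)) hx
    have hexp : t * x ^ 2 - (1/2) * x ^ (2*m) ≤ -x := by
      have h3 : x ^ 3 ≤ x ^ (2*m) := pow_le_pow_right₀ hx1 (by omega)
      have h4 : t * x ^ 2 + x ≤ (1/2) * x ^ 3 := by
        have hx0 : (0:ℝ) < x := lt_of_lt_of_le one_pos hx1
        have : (|t| + 1) * x ^ 2 ≤ (x/2) * x ^ 2 := by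
          have : |t| + 1 ≤ x / 2 := by linarith
          exact mul_le_mul_of_nonneg_right this (sq_nonneg x)
        have ht' : t * x ^ 2 ≤ |t| * x ^ 2 :=
          mul_le_mul_of_nonneg_right (le_abs_self t) (sq_nonneg x)
        have hxx : x ≤ x ^ 2 := by nlinarith
        nlinarith
      linarith
    calc |r.eval x * Real.exp (t * x ^ 2 - (1/2) * x ^ (2*m))|
        = |r.eval x| * Real.exp (t * x ^ 2 - (1/2) * x ^ (2*m)) := by
          rw [abs_mul, abs_of_pos (Real.exp_pos _)]
      _ ≤ |r.eval x| * Real.exp (-x) :=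
          mul_le_mul_of_nonneg_left (Real.exp_le_exp.2 hexp) (abs_nonneg _)
      _ ≤ 1 := hR0 x hxR0
  obtain ⟨R1, hR11, hR1⟩ := tail q
  obtain ⟨R2, hR21, hR2⟩ := tail (q.comp (-X))
  set R := max R1 R2 with hR
  have hcont : ContinuousOn (fun x : ℝ => |q.eval x * Real.exp (t * x ^ 2 - (1/2) * x ^ (2*m))|)
      (Set.Icc (-R) R) := by
    apply Continuous.continuousOn
    exact (q.continuous_aeval.mul ((continuous_const.mul (continuous_pow 2)).sub
      (continuous_const.mul (continuous_pow (2*m)))).rexp).abs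
  obtain ⟨C0, hC0⟩ := (isCompact_Icc (a := -R) (b := R)).exists_bound_of_continuousOn hcont
  refine ⟨max C0 1, fun x => ?_⟩
  rcases le_or_gt x R with hxR | hxR
  · rcases le_or_gt (-R) x with hxR' | hxR'
    · exact le_trans (by simpa using hC0 x ⟨hxR', hxR⟩) (le_max_left _ _)
    · -- x < -R ≤ -R2, use the comp (-X) tail at -x
      have h2 : R2 ≤ -x := by
        have : R2 ≤ R := le_max_right _ _
        linarith
      have := hR2 (-x) h2
      rw [eval_comp] at this
      simp only [eval_neg, eval_X, neg_neg] at this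
      have heq : t * (-x) ^ 2 - (1/2) * (-x) ^ (2*m) = t * x ^ 2 - (1/2) * x ^ (2*m) := by
        rw [neg_sq, Even.neg_pow (even_two_mul m)]
      rw [heq] at this
      exact le_trans this (le_max_right _ _)
  · have h1 : R1 ≤ x := le_trans (le_max_left _ _) hxR.le
    exact le_trans (hR1 x h1) (le_max_right _ _)


lemma integrable_base (hm : 2 ≤ m) (hlam : -1 < lam) :
    Integrable (fun x : ℝ => |x| ^ (2*lam+1) * Real.exp (-(1/2) * x ^ (2*m))) := by
  have hIoi : IntegrableOn (fun x : ℝ => |x| ^ (2*lam+1) * Real.exp (-(1/2) * x ^ (2*m)))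
      (Set.Ioi 0) := by
    have h := integrableOn_rpow_mul_exp_neg_mul_rpow (p := (2*m : ℕ)) (s := 2*lam+1)
      (b := 1/2) (by linarith) (by exact_mod_cast Nat.one_le_iff_ne_zero.2 (by omega)) (by norm_num)
    refine h.congr_fun (fun x hx => ?_) measurableSet_Ioi
    rw [Set.mem_Ioi] at hx
    rw [abs_of_pos hx]; beta_reduce; rw [Real.rpow_natCast]
  have hIio : IntegrableOn (fun x : ℝ => |x| ^ (2*lam+1) * Real.exp (-(1/2) * x ^ (2*m)))
      (Set.Iio 0) := by
    rw [← (Measure.measurePreserving_neg (volume : Measure ℝ)).integrableOn_comp_preimage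
        (Homeomorph.neg ℝ).measurableEmbedding]
    have : (Neg.neg ⁻¹' Set.Iio (0:ℝ)) = Set.Ioi 0 := by
      ext x; simp
    rw [this]
    refine hIoi.congr_fun (fun x hx => ?_) measurableSet_Ioi
    simp only [Function.comp_def, abs_neg, Even.neg_pow (even_two_mul m)]
  rw [← integrableOn_univ, ← Set.Iio_union_Ici (a := (0:ℝ)), integrableOn_union,
    integrableOn_Ici_iff_integrableOn_Ioi]
  exact ⟨hIio, hIoi⟩

/-- Any polynomial times the Freud weight is integrable. -/
lemma freud_integrable (hm : 2 ≤ m) (hlam : -1 < lam) (q : Polynomial ℝ) :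
    Integrable (fun x : ℝ => q.eval x * freudWeight m lam t x) := by
  obtain ⟨C, hC⟩ := bdd_factor (t := t) hm q
  have key : (fun x : ℝ => q.eval x * freudWeight m lam t x)
      = fun x => (q.eval x * Real.exp (t * x ^ 2 - (1/2) * x ^ (2*m))) *
          (|x| ^ (2*lam+1) * Real.exp (-(1/2) * x ^ (2*m))) := by
    funext x
    unfold freudWeight
    rw [show t * x ^ 2 - x ^ (2*m) = (t * x ^ 2 - (1/2) * x ^ (2*m)) + (-(1/2) * x ^ (2*m)) by ring,
      Real.exp_add]
    ring
  rw [key]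
  refine Integrable.bdd_mul (c := C) (integrable_base hm hlam) ?_ ?_
  · exact (q.continuous_aeval.mul ((continuous_const.mul (continuous_pow 2)).sub
      (continuous_const.mul (continuous_pow (2*m)))).rexp).aestronglyMeasurable
  · refine Filter.Eventually.of_forall (fun x => ?_)
    have := hC x
    rw [abs_mul, abs_of_pos (Real.exp_pos _)] at this
    simpa [Real.norm_eq_abs, abs_mul, abs_of_pos (Real.exp_pos _)] using this

/-- positivity of ∫ q² ω for q ≠ 0. -/
lemma freud_integral_sq_pos (hm : 2 ≤ m) (hlam : -1 < lam) {q : Polynomial ℝ} (hq : q ≠ 0) :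
    0 < ∫ x : ℝ, q.eval x ^ 2 * freudWeight m lam t x := by
  have hint : Integrable (fun x : ℝ => q.eval x ^ 2 * freudWeight m lam t x) := by
    have := freud_integrable (t := t) hm hlam (q * q)
    refine this.congr (Filter.Eventually.of_forall (fun x => ?_))
    simp [sq]
  have hnn : 0 ≤ fun x : ℝ => q.eval x ^ 2 * freudWeight m lam t x := by
    intro x; exact mul_nonneg (sq_nonneg _) (freud_nonneg x)
  rw [integral_pos_iff_support_of_nonneg hnn hint]
  have hsub : {(0:ℝ)} ∪ {x | q.IsRoot x} ⊇
      (Function.support fun x : ℝ => q.eval x ^ 2 * freudWeight m lam t x)ᶜ := by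
    intro x hx
    simp only [Function.mem_support, not_not, Set.mem_compl_iff] at hx
    rcases eq_or_ne x 0 with rfl | hx0
    · exact Or.inl rfl
    · rcases mul_eq_zero.1 hx with h | h
      · exact Or.inr (by simpa [Polynomial.IsRoot] using pow_eq_zero_iff (n := 2) (by norm_num) |>.1 h)
      · exact absurd h (freud_pos hx0).ne'
  have hz : volume ((Function.support fun x : ℝ => q.eval x ^ 2 * freudWeight m lam t x)ᶜ) = 0 := by
    refine measure_mono_null hsub ?_
    exact measure_union_null (measure_singleton 0) ((Polynomial.finite_setOf_isRoot hq).measure_zero _)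
  by_contra hle
  push_neg at hle
  have h0 : volume (Function.support fun x : ℝ => q.eval x ^ 2 * freudWeight m lam t x) = 0 :=
    le_antisymm hle (zero_le)
  have hcontr : (volume : Measure ℝ) Set.univ = 0 := by
    have hle2 := measure_union_le (μ := (volume : Measure ℝ))
      (Function.support fun x : ℝ => q.eval x ^ 2 * freudWeight m lam t x)
      ((Function.support fun x : ℝ => q.eval x ^ 2 * freudWeight m lam t x)ᶜ)
    rw [Set.union_compl_self, h0, hz] at hle2
    simpa using hle2
  rw [Real.volume_univ] at hcontr
  exact ENNReal.top_ne_zero hcontr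

/-- integral of an odd function vanishes. -/
lemma odd_integral {f : ℝ → ℝ} (hf : ∀ x, f (-x) = - f x) : ∫ x : ℝ, f x = 0 := by
  have h1 : ∫ x : ℝ, f (-x) = ∫ x : ℝ, f x := integral_neg_eq_self f volume
  have h2 : ∫ x : ℝ, f (-x) = - ∫ x : ℝ, f x := by
    simp_rw [hf]
    exact integral_neg f
  linarith

end Aux

section Alg

/-- Monic polys of each degree span. -/
lemma span_aux {Q : ℕ → Polynomial ℝ} (hmonic : ∀ n, (Q n).Monic)
    (hdeg : ∀ n, (Q n).natDegree = n) :
    ∀ N (q : Polynomial ℝ), q.natDegree ≤ N →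
      ∃ a : ℕ → ℝ, q = ∑ k ∈ Finset.range (N + 1), C (a k) * Q k := by
  intro N
  induction N with
  | zero =>
    intro q hq
    have hQ0 : Q 0 = 1 := (hmonic 0).natDegree_eq_zero.1 (hdeg 0)
    refine ⟨fun _ => q.coeff 0, ?_⟩
    simpa [hQ0] using Polynomial.eq_C_of_natDegree_le_zero hq
  | succ N ih =>
    intro q hq
    set c := q.coeff (N + 1) with hc
    have hrd : (q - C c * Q (N + 1)).natDegree ≤ N := by
      rw [natDegree_le_iff_coeff_eq_zero]
      intro M hM
      rw [coeff_sub, coeff_C_mul]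
      rcases eq_or_lt_of_le (Nat.succ_le_of_lt hM) with h | h
      · have h1 : (Q (N + 1)).coeff M = 1 := by
          rw [← h]
          have := (hmonic (N + 1)).coeff_natDegree
          rwa [hdeg (N + 1)] at this
        rw [h1, ← h, ← hc, mul_one, sub_self]
      · rw [coeff_eq_zero_of_natDegree_lt (lt_of_le_of_lt hq h),
          coeff_eq_zero_of_natDegree_lt (by rw [hdeg]; exact h), mul_zero, sub_self]
    obtain ⟨a, ha⟩ := ih _ hrd
    refine ⟨fun k => if k = N + 1 then c else a k, ?_⟩
    have heq : ∑ k ∈ Finset.range (N + 1), C (if k = N + 1 then c else a k) * Q k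
        = ∑ k ∈ Finset.range (N + 1), C (a k) * Q k := by
      refine Finset.sum_congr rfl fun k hk => ?_
      rw [if_neg (by have := Finset.mem_range.1 hk; omega)]
    have hbeta : (fun k => if k = N + 1 then c else a k) (N + 1) = c := by simp
    rw [Finset.sum_range_succ, heq, ← ha, hbeta]
    ring

/-- Parity from the three-term recurrence. -/
lemma parity_aux {Q : ℕ → Polynomial ℝ} {b : ℕ → ℝ} (h0 : Q 0 = 1) (h1 : Q 1 = X)
    (hrec : ∀ n, 1 ≤ n → Q (n + 1) = X * Q n - C (b n) * Q (n - 1)) :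
    ∀ n, (Q n).comp (-X) = (-1) ^ n * Q n := by
  intro n
  induction n using Nat.strong_induction_on with
  | _ n ih =>
    match n with
    | 0 => simp [h0]
    | 1 => simp [h1]
    | (k + 2) =>
      have hr := hrec (k + 1) (by omega)
      simp only [Nat.add_sub_cancel] at hr
      rw [hr, sub_comp, mul_comp, mul_comp, X_comp, C_comp,
        ih (k + 1) (by omega), ih k (by omega)]
      ring

lemma eval_parity {Q : ℕ → Polynomial ℝ} (hpar : ∀ n, (Q n).comp (-X) = (-1) ^ n * Q n)
    (n : ℕ) (x : ℝ) : (Q n).eval (-x) = (-1) ^ n * (Q n).eval x := by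
  have := congrArg (eval x) (hpar n)
  simpa [eval_comp] using this

/-- Odd-index polynomials factor as X * S. -/
lemma odd_factor {Q : ℕ → Polynomial ℝ} (hmonic : ∀ n, (Q n).Monic)
    (hdeg : ∀ n, (Q n).natDegree = n)
    (hpar : ∀ n, (Q n).comp (-X) = (-1) ^ n * Q n) (n : ℕ) :
    ∃ S : Polynomial ℝ, Q (2 * n + 1) = X * S ∧ S.natDegree = 2 * n := by
  have h0 : (Q (2 * n + 1)).eval 0 = 0 := by
    have h := eval_parity hpar (2 * n + 1) 0
    rw [neg_zero] at h
    have hpow : (-1 : ℝ) ^ (2 * n + 1) = -1 := Odd.neg_one_pow ⟨n, by ring⟩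
    rw [hpow] at h
    linarith
  obtain ⟨S, hS⟩ := (Polynomial.X_dvd_iff (f := Q (2 * n + 1))).2 (by rw [coeff_zero_eq_eval_zero]; exact h0)
  have hS0 : S ≠ 0 := by
    rintro rfl
    rw [mul_zero] at hS
    exact (hmonic (2 * n + 1)).ne_zero hS
  have hdS : 2 * n + 1 = 1 + S.natDegree := by
    rw [← hdeg (2 * n + 1), hS, natDegree_mul X_ne_zero hS0, natDegree_X]
  exact ⟨S, hS, by omega⟩

lemma monic_sub_natDegree_le {p q : Polynomial ℝ} (hp : p.Monic) (hq : q.Monic) {d : ℕ}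
    (hpd : p.natDegree = d + 1) (hqd : q.natDegree = d + 1) : (p - q).natDegree ≤ d := by
  rw [natDegree_le_iff_coeff_eq_zero]
  intro M hM
  rw [coeff_sub]
  rcases eq_or_lt_of_le (Nat.succ_le_of_lt hM) with h | h
  · have h1 : p.coeff M = 1 := by rw [← h, show d.succ = d + 1 from rfl, ← hpd]; exact hp.coeff_natDegree
    have h2 : q.coeff M = 1 := by rw [← h, show d.succ = d + 1 from rfl, ← hqd]; exact hq.coeff_natDegree
    rw [h1, h2, sub_self]
  · rw [coeff_eq_zero_of_natDegree_lt (by omega), coeff_eq_zero_of_natDegree_lt (by omega),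
      sub_self]

end Alg


section Orth
variable {m : ℕ} {t lam : ℝ}

lemma integrable_eval_mul (hm : 2 ≤ m) (hlam : -1 < lam) (A B : Polynomial ℝ) :
    Integrable (fun x : ℝ => A.eval x * B.eval x * freudWeight m lam t x) := by
  refine (freud_integrable (t := t) hm hlam (A * B)).congr
    (Filter.Eventually.of_forall fun x => ?_)
  simp [eval_mul]

lemma orth_lower (hm : 2 ≤ m) (hlam : -1 < lam) {Q : ℕ → Polynomial ℝ}
    (hmonic : ∀ n, (Q n).Monic) (hdeg : ∀ n, (Q n).natDegree = n)
    (horthQ : ∀ j k, j ≠ k → ∫ x : ℝ, (Q j).eval x * (Q k).eval x * freudWeight m lam t x = 0)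
    (j : ℕ) (q : Polynomial ℝ) (hq : q.natDegree < j) :
    ∫ x : ℝ, q.eval x * (Q j).eval x * freudWeight m lam t x = 0 := by
  obtain ⟨a, ha⟩ := span_aux hmonic hdeg (j - 1) q (by omega)
  have hj : j - 1 + 1 = j := by omega
  rw [hj] at ha
  have hfun : (fun x : ℝ => q.eval x * (Q j).eval x * freudWeight m lam t x)
      = fun x => ∑ k ∈ Finset.range j,
          a k * ((Q k).eval x * (Q j).eval x * freudWeight m lam t x) := by
    funext x
    rw [ha, eval_finset_sum, Finset.sum_mul, Finset.sum_mul]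
    refine Finset.sum_congr rfl fun k hk => ?_
    simp only [eval_mul, eval_C]
    ring
  rw [hfun, integral_finset_sum]
  · refine Finset.sum_eq_zero fun k hk => ?_
    rw [MeasureTheory.integral_const_mul, horthQ k j (by have := Finset.mem_range.1 hk; omega), mul_zero]
  · intro k _
    exact (integrable_eval_mul hm hlam (Q k) (Q j)).const_mul _

lemma eq_zero_of_orth (hm : 2 ≤ m) (hlam : -1 < lam) {Q : ℕ → Polynomial ℝ}
    (hmonic : ∀ n, (Q n).Monic) (hdeg : ∀ n, (Q n).natDegree = n)
    (N : ℕ) (q : Polynomial ℝ) (hdq : q.natDegree ≤ N)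
    (h : ∀ k, k ≤ N → ∫ x : ℝ, q.eval x * (Q k).eval x * freudWeight m lam t x = 0) :
    q = 0 := by
  by_contra hq
  obtain ⟨a, ha⟩ := span_aux hmonic hdeg N q hdq
  have hfun : (fun x : ℝ => q.eval x ^ 2 * freudWeight m lam t x)
      = fun x => ∑ k ∈ Finset.range (N + 1),
          a k * (q.eval x * (Q k).eval x * freudWeight m lam t x) := by
    funext x
    have h1 : q.eval x ^ 2 * freudWeight m lam t x
        = (∑ k ∈ Finset.range (N + 1), C (a k) * Q k).eval x * q.eval x
            * freudWeight m lam t x := by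
      rw [← ha]; ring
    rw [h1, eval_finset_sum, Finset.sum_mul, Finset.sum_mul]
    refine Finset.sum_congr rfl fun k hk => ?_
    simp only [eval_mul, eval_C]
    ring
  have hzero : ∫ x : ℝ, q.eval x ^ 2 * freudWeight m lam t x = 0 := by
    rw [hfun, integral_finset_sum]
    · exact Finset.sum_eq_zero fun k hk => by
        rw [MeasureTheory.integral_const_mul, h k (by have := Finset.mem_range.1 hk; omega), mul_zero]
    · intro k _
      exact (integrable_eval_mul hm hlam q (Q k)).const_mul _
  exact absurd hzero (freud_integral_sq_pos hm hlam hq).ne'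

lemma even_eval0_ne (hm : 2 ≤ m) (hlam : -1 < lam) {Q : ℕ → Polynomial ℝ}
    (hmonic : ∀ n, (Q n).Monic) (hdeg : ∀ n, (Q n).natDegree = n)
    (horthQ : ∀ j k, j ≠ k → ∫ x : ℝ, (Q j).eval x * (Q k).eval x * freudWeight m lam t x = 0)
    (hpar : ∀ n, (Q n).comp (-X) = (-1) ^ n * Q n) (n : ℕ) :
    (Q (2 * n)).eval 0 ≠ 0 := by
  rcases Nat.eq_zero_or_pos n with rfl | hn
  · have hQ0 : Q 0 = 1 := (hmonic 0).natDegree_eq_zero.1 (hdeg 0)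
    simp [hQ0]
  intro h0
  obtain ⟨S, hS⟩ := (Polynomial.X_dvd_iff (f := Q (2 * n))).2
    (by rw [coeff_zero_eq_eval_zero]; exact h0)
  have hq : (Q (2 * n)).comp (-X) = Q (2 * n) := by
    rw [hpar (2 * n), Even.neg_one_pow ⟨n, by ring⟩, one_mul]
  have hSpar : S.comp (-X) = -S := by
    have h2 : (-X : Polynomial ℝ) * S.comp (-X) = X * S := by
      calc (-X : Polynomial ℝ) * S.comp (-X) = (X * S).comp (-X) := by rw [mul_comp, X_comp]
        _ = (Q (2 * n)).comp (-X) := by rw [← hS]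
        _ = Q (2 * n) := hq
        _ = X * S := hS
    have h3 : (X : Polynomial ℝ) * (S.comp (-X) + S) = 0 := by
      calc (X : Polynomial ℝ) * (S.comp (-X) + S)
          = -((-X : Polynomial ℝ) * S.comp (-X)) + X * S := by ring
        _ = 0 := by rw [h2]; ring
    rcases mul_eq_zero.1 h3 with h4 | h4
    · exact absurd h4 X_ne_zero
    · exact eq_neg_of_add_eq_zero_left h4
  have hS0eval : S.eval 0 = 0 := by
    have h5 := congrArg (eval 0) hSpar
    simp only [eval_comp, eval_neg, eval_X, neg_zero] at h5
    linarith
  obtain ⟨T, hT⟩ := (Polynomial.X_dvd_iff (f := S)).2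
    (by rw [coeff_zero_eq_eval_zero]; exact hS0eval)
  have hQT : Q (2 * n) = X ^ 2 * T := by rw [hS, hT]; ring
  have hT0 : T ≠ 0 := by
    rintro rfl
    rw [mul_zero] at hQT
    exact (hmonic (2 * n)).ne_zero hQT
  have hdT : 2 * n = 2 + T.natDegree := by
    rw [← hdeg (2 * n), hQT, natDegree_mul (pow_ne_zero 2 X_ne_zero) hT0, natDegree_pow,
      natDegree_X, mul_one]
  have horthT := orth_lower hm hlam hmonic hdeg horthQ (2 * n) T (by omega)
  have hfun : (fun x : ℝ => T.eval x * (Q (2 * n)).eval x * freudWeight m lam t x)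
      = fun x => T.eval x ^ 2 * freudWeight m (lam + 1) t x := by
    funext x
    rw [hQT, freud_shift hlam]
    simp only [eval_mul, eval_pow, eval_X]
    ring
  rw [hfun] at horthT
  exact absurd horthT (freud_integral_sq_pos hm (by linarith) hT0).ne'

end Orth
section Main
variable {m : ℕ} {t : ℝ} {P : ℝ → ℕ → Polynomial ℝ} {β : ℝ → ℕ → ℝ}

lemma part_i (hm : 2 ≤ m)
    (hmonic : ∀ lam : ℝ, -1 < lam → ∀ n, (P lam n).Monic)
    (hdeg : ∀ lam : ℝ, -1 < lam → ∀ n, (P lam n).natDegree = n)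
    (horth : ∀ lam : ℝ, -1 < lam → ∀ j k, j ≠ k →
      ∫ x : ℝ, (P lam j).eval x * (P lam k).eval x * freudWeight m lam t x = 0)
    (hP0 : ∀ lam : ℝ, -1 < lam → P lam 0 = 1) (hP1 : ∀ lam : ℝ, -1 < lam → P lam 1 = X)
    (hrec : ∀ lam : ℝ, -1 < lam → ∀ n, 1 ≤ n →
      P lam (n + 1) = X * P lam n - C (β lam n) * P lam (n - 1))
    (lam : ℝ) (hlam : -1 < lam) (n : ℕ) :
    X * P (lam + 1) (2 * n) = P lam (2 * n + 1) := by
  have hlam1 : -1 < lam + 1 := by linarith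
  have par := parity_aux (hP0 lam hlam) (hP1 lam hlam) (hrec lam hlam)
  have par1 := parity_aux (hP0 _ hlam1) (hP1 _ hlam1) (hrec _ hlam1)
  set D := X * P (lam + 1) (2 * n) - P lam (2 * n + 1) with hD
  have hDdeg : D.natDegree ≤ 2 * n := by
    refine monic_sub_natDegree_le (monic_X.mul (hmonic _ hlam1 (2 * n)))
      (hmonic _ hlam (2 * n + 1)) ?_ ?_
    · rw [natDegree_mul X_ne_zero (hmonic _ hlam1 (2 * n)).ne_zero, natDegree_X,
        hdeg _ hlam1]
      omega
    · exact hdeg _ hlam _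
  have hDorth : ∀ k, k ≤ 2 * n →
      ∫ x : ℝ, D.eval x * (P lam k).eval x * freudWeight m lam t x = 0 := by
    intro k hk
    have hsplit : (fun x : ℝ => D.eval x * (P lam k).eval x * freudWeight m lam t x)
        = fun x => (X * P (lam + 1) (2 * n)).eval x * (P lam k).eval x * freudWeight m lam t x
          - (P lam (2 * n + 1)).eval x * (P lam k).eval x * freudWeight m lam t x := by
      funext x
      rw [hD]
      simp only [eval_sub]
      ring
    rw [hsplit, integral_sub (integrable_eval_mul hm hlam _ _) (integrable_eval_mul hm hlam _ _),
      horth lam hlam (2 * n + 1) k (by omega), sub_zero]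
    rcases Nat.even_or_odd k with hke | hko
    · refine odd_integral fun x => ?_
      have e1 := eval_parity par1 (2 * n) x
      have e2 := eval_parity par k x
      rw [Even.neg_one_pow ⟨n, by ring⟩, one_mul] at e1
      rw [Even.neg_one_pow hke, one_mul] at e2
      simp only [eval_mul, eval_X]
      rw [e1, e2, freud_even]
      ring
    · obtain ⟨j, hj⟩ := hko
      subst hj
      obtain ⟨S, hSf, hSdeg⟩ := odd_factor (hmonic _ hlam) (hdeg _ hlam) par j
      have hfun : (fun x : ℝ =>
            (X * P (lam + 1) (2 * n)).eval x * (P lam (2 * j + 1)).eval x * freudWeight m lam t x)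
          = fun x => S.eval x * (P (lam + 1) (2 * n)).eval x * freudWeight m (lam + 1) t x := by
        funext x
        rw [hSf, freud_shift hlam]
        simp only [eval_mul, eval_X]
        ring
      rw [hfun]
      exact orth_lower hm hlam1 (hmonic _ hlam1) (hdeg _ hlam1) (horth _ hlam1) (2 * n) S
        (by omega)
  have hD0 : D = 0 :=
    eq_zero_of_orth hm hlam (hmonic _ hlam) (hdeg _ hlam) (2 * n) D hDdeg hDorth
  exact sub_eq_zero.1 hD0

lemma deriv_ne (hm : 2 ≤ m)
    (hmonic : ∀ lam : ℝ, -1 < lam → ∀ n, (P lam n).Monic)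
    (hdeg : ∀ lam : ℝ, -1 < lam → ∀ n, (P lam n).natDegree = n)
    (horth : ∀ lam : ℝ, -1 < lam → ∀ j k, j ≠ k →
      ∫ x : ℝ, (P lam j).eval x * (P lam k).eval x * freudWeight m lam t x = 0)
    (hP0 : ∀ lam : ℝ, -1 < lam → P lam 0 = 1) (hP1 : ∀ lam : ℝ, -1 < lam → P lam 1 = X)
    (hrec : ∀ lam : ℝ, -1 < lam → ∀ n, 1 ≤ n →
      P lam (n + 1) = X * P lam n - C (β lam n) * P lam (n - 1))
    (lam : ℝ) (hlam : -1 < lam) (k : ℕ) :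
    (derivative (P lam (2 * k + 1))).eval 0 ≠ 0 := by
  have hlam1 : -1 < lam + 1 := by linarith
  have hi := part_i (β := β) hm hmonic hdeg horth hP0 hP1 hrec lam hlam k
  have hder : (derivative (P lam (2 * k + 1))).eval 0 = (P (lam + 1) (2 * k)).eval 0 := by
    rw [← hi, derivative_mul, derivative_X]
    simp
  rw [hder]
  have par1 := parity_aux (hP0 _ hlam1) (hP1 _ hlam1) (hrec _ hlam1)
  exact even_eval0_ne hm hlam1 (hmonic _ hlam1) (hdeg _ hlam1) (horth _ hlam1) par1 k

lemma part_ii (hm : 2 ≤ m)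
    (hmonic : ∀ lam : ℝ, -1 < lam → ∀ n, (P lam n).Monic)
    (hdeg : ∀ lam : ℝ, -1 < lam → ∀ n, (P lam n).natDegree = n)
    (horth : ∀ lam : ℝ, -1 < lam → ∀ j k, j ≠ k →
      ∫ x : ℝ, (P lam j).eval x * (P lam k).eval x * freudWeight m lam t x = 0)
    (hP0 : ∀ lam : ℝ, -1 < lam → P lam 0 = 1) (hP1 : ∀ lam : ℝ, -1 < lam → P lam 1 = X)
    (hrec : ∀ lam : ℝ, -1 < lam → ∀ n, 1 ≤ n →
      P lam (n + 1) = X * P lam n - C (β lam n) * P lam (n - 1))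
    (lam : ℝ) (hlam : -1 < lam) (k : ℕ) :
    X ^ 2 * P (lam + 1) (2 * k + 1) =
      X * P lam (2 * k + 2)
        - C (β lam (2 * k + 2) +
            (derivative (P lam (2 * k + 3))).eval 0 /
              (derivative (P lam (2 * k + 1))).eval 0) * P lam (2 * k + 1) := by
  have hlam1 : -1 < lam + 1 := by linarith
  have par := parity_aux (hP0 lam hlam) (hP1 lam hlam) (hrec lam hlam)
  have par1 := parity_aux (hP0 _ hlam1) (hP1 _ hlam1) (hrec _ hlam1)
  set Q1 := P (lam + 1) (2 * k + 1) with hQ1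
  set L := X ^ 2 * Q1 with hL
  set A := P lam (2 * k + 3) with hA
  set B := P lam (2 * k + 1) with hB
  set W := fun x : ℝ => freudWeight m lam t x with hW
  set h := ∫ x : ℝ, B.eval x ^ 2 * W x with hh
  have hpos : 0 < h := freud_integral_sq_pos hm hlam (hmonic _ hlam (2 * k + 1)).ne_zero
  set v := ∫ x : ℝ, L.eval x * B.eval x * W x with hv
  set a := v / h with ha
  set D := L - A - C a * B with hD
  -- degree bound
  have hDdeg : D.natDegree ≤ 2 * k + 2 := by
    have h1 : (L - A).natDegree ≤ 2 * k + 2 := by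
      refine monic_sub_natDegree_le ((monic_X_pow 2).mul (hmonic _ hlam1 (2 * k + 1)))
        (hmonic _ hlam (2 * k + 3)) ?_ ?_
      · show (X ^ 2 * P (lam + 1) (2 * k + 1)).natDegree = 2 * k + 2 + 1
        rw [natDegree_mul (pow_ne_zero 2 X_ne_zero) (hmonic _ hlam1 (2 * k + 1)).ne_zero,
          natDegree_pow, natDegree_X, hdeg _ hlam1]
        omega
      · show (P lam (2 * k + 3)).natDegree = 2 * k + 2 + 1
        rw [hdeg _ hlam]
    have h2 : (C a * B).natDegree ≤ 2 * k + 2 := by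
      refine le_trans (natDegree_C_mul_le _ _) ?_
      rw [hB, hdeg _ hlam]
      omega
    calc D.natDegree = ((L - A) - C a * B).natDegree := by rw [hD]
      _ ≤ max (L - A).natDegree (C a * B).natDegree := natDegree_sub_le _ _
      _ ≤ 2 * k + 2 := max_le h1 h2
  -- integrals of L against P lam j
  have hLint : ∀ j, j ≤ 2 * k → ∫ x : ℝ, L.eval x * (P lam j).eval x * W x = 0 := by
    intro j hj
    have hfun : (fun x : ℝ => L.eval x * (P lam j).eval x * W x)
        = fun x => (P lam j).eval x * Q1.eval x * freudWeight m (lam + 1) t x := by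
      funext x
      rw [hL, hW, freud_shift hlam]
      simp only [eval_mul, eval_pow, eval_X]
      ring
    rw [hfun]
    exact orth_lower hm hlam1 (hmonic _ hlam1) (hdeg _ hlam1) (horth _ hlam1) (2 * k + 1)
      (P lam j) (by rw [hdeg _ hlam]; omega)
  have hLtop : ∫ x : ℝ, L.eval x * (P lam (2 * k + 2)).eval x * W x = 0 := by
    refine odd_integral fun x => ?_
    have e1 := eval_parity par1 (2 * k + 1) x
    have e2 := eval_parity par (2 * k + 2) x
    have hp1 : (-1 : ℝ) ^ (2 * k + 1) = -1 := Odd.neg_one_pow ⟨k, by ring⟩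
    have hp2 : (-1 : ℝ) ^ (2 * k + 2) = 1 := Even.neg_one_pow ⟨k + 1, by ring⟩
    rw [hp1] at e1
    rw [hp2, one_mul] at e2
    simp only [hL, hQ1, hW, eval_mul, eval_pow, eval_X]
    rw [e1, e2, freud_even, neg_sq]
    ring
  -- orthogonality of D
  have hDorth : ∀ j, j ≤ 2 * k + 2 →
      ∫ x : ℝ, D.eval x * (P lam j).eval x * W x = 0 := by
    intro j hj
    have hsplit : (fun x : ℝ => D.eval x * (P lam j).eval x * W x)
        = fun x => L.eval x * (P lam j).eval x * W x
          - A.eval x * (P lam j).eval x * W x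
          - a * (B.eval x * (P lam j).eval x * W x) := by
      funext x
      rw [hD]
      simp only [eval_sub, eval_mul, eval_C]
      ring
    have hint1 : Integrable (fun x : ℝ => L.eval x * (P lam j).eval x * W x) :=
      integrable_eval_mul hm hlam _ _
    have hint2 : Integrable (fun x : ℝ => A.eval x * (P lam j).eval x * W x) :=
      integrable_eval_mul hm hlam _ _
    have hint3 : Integrable (fun x : ℝ => a * (B.eval x * (P lam j).eval x * W x)) :=
      (integrable_eval_mul hm hlam _ _).const_mul _
    have hint12 : Integrable (fun x : ℝ => L.eval x * (P lam j).eval x * W x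
        - A.eval x * (P lam j).eval x * W x) := hint1.sub hint2
    rw [hsplit, integral_sub hint12 hint3, integral_sub hint1 hint2,
      MeasureTheory.integral_const_mul]
    have hAj : ∫ x : ℝ, A.eval x * (P lam j).eval x * W x = 0 :=
      horth lam hlam (2 * k + 3) j (by omega)
    rcases eq_or_ne j (2 * k + 1) with rfl | hne
    · have hBj : ∫ x : ℝ, B.eval x * (P lam (2 * k + 1)).eval x * W x = h := by
        rw [hh]
        congr 1
        funext x
        rw [hB]
        ring
      rw [hAj, hBj, ha, div_mul_cancel₀ _ hpos.ne']
      ring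
    · have hBj : ∫ x : ℝ, B.eval x * (P lam j).eval x * W x = 0 :=
        horth lam hlam (2 * k + 1) j (fun hc => hne hc.symm)
      have hLj : ∫ x : ℝ, L.eval x * (P lam j).eval x * W x = 0 := by
        rcases eq_or_ne j (2 * k + 2) with rfl | hne2
        · exact hLtop
        · exact hLint j (by omega)
      rw [hAj, hBj, hLj, mul_zero]
      ring
  have hD0 : D = 0 :=
    eq_zero_of_orth hm hlam (hmonic _ hlam) (hdeg _ hlam) (2 * k + 2) D hDdeg hDorth
  have hLeq : L = A + C a * B := by
    have : L - (A + C a * B) = D := by rw [hD]; ring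
    have h0 : L - (A + C a * B) = 0 := by rw [this, hD0]
    linear_combination h0
  -- derivative at 0 pins a
  have hderL : (derivative L).eval 0 = 0 := by
    rw [hL, derivative_mul]
    simp
  have hderEq : (derivative A).eval 0 + a * (derivative B).eval 0 = 0 := by
    have h6 := congrArg (fun p => (derivative p).eval 0) hLeq
    simp only [derivative_add, derivative_C_mul, eval_add, eval_mul, eval_C] at h6
    rw [hderL] at h6
    linarith
  have hBder : (derivative B).eval 0 ≠ 0 := by
    rw [hB]
    exact deriv_ne (β := β) hm hmonic hdeg horth hP0 hP1 hrec lam hlam k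
  have ha2 : a = -((derivative A).eval 0 / (derivative B).eval 0) := by
    field_simp
    linarith
  -- finish with the recurrence
  have hrec2 := hrec lam hlam (2 * k + 2) (by omega)
  have hidx : 2 * k + 2 - 1 = 2 * k + 1 := by omega
  rw [hidx] at hrec2
  have hXP : X * P lam (2 * k + 2) = A + C (β lam (2 * k + 2)) * B := by
    rw [hA, hB, show 2 * k + 3 = 2 * k + 2 + 1 from rfl, hrec2]
    ring
  rw [hXP, hLeq, ha2, C_add, C_neg]
  ring

end Main

/-- For `λ > −1`, `t ∈ ℝ` and integer `m ≥ 2`, the monic orthogonal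
polynomials of the generalised higher order Freud weight satisfy, for every `n ≥ 1`:
(i) `x P_{2n}(x;λ+1) = P_{2n+1}(x;λ)`, and
(ii) `x² P_{2n−1}(x;λ+1) = x P_{2n}(x;λ) − (β_{2n}(λ) + P_{2n+1}′(0;λ)/P_{2n−1}′(0;λ)) P_{2n−1}(x;λ)`,
where `P_{2n−1}′(0;λ) ≠ 0`. -/
theorem mixed_recurrence (m : ℕ) (hm : 2 ≤ m) (t : ℝ)
    (P : ℝ → ℕ → Polynomial ℝ) (β : ℝ → ℕ → ℝ)
    (hmonic : ∀ lam, -1 < lam → ∀ n, (P lam n).Monic)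
    (hdeg : ∀ lam, -1 < lam → ∀ n, (P lam n).natDegree = n)
    (horth : ∀ lam, -1 < lam → ∀ j k, j ≠ k →
      ∫ x : ℝ, (P lam j).eval x * (P lam k).eval x * freudWeight m lam t x = 0)
    (hβpos : ∀ lam, -1 < lam → ∀ n, 1 ≤ n → 0 < β lam n)
    (hP0 : ∀ lam, -1 < lam → P lam 0 = 1) (hP1 : ∀ lam, -1 < lam → P lam 1 = X)
    (hrec : ∀ lam, -1 < lam → ∀ n, 1 ≤ n →
      P lam (n + 1) = X * P lam n - C (β lam n) * P lam (n - 1)) :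
    ∀ lam, -1 < lam → ∀ n : ℕ, 1 ≤ n →
      X * P (lam + 1) (2 * n) = P lam (2 * n + 1) ∧
      (derivative (P lam (2 * n - 1))).eval 0 ≠ 0 ∧
      X ^ 2 * P (lam + 1) (2 * n - 1) =
        X * P lam (2 * n)
          - C (β lam (2 * n) +
              (derivative (P lam (2 * n + 1))).eval 0 /
                (derivative (P lam (2 * n - 1))).eval 0) * P lam (2 * n - 1) := by
  intro lam hlam n hn
  obtain ⟨k, rfl⟩ : ∃ k, n = k + 1 := ⟨n - 1, by omega⟩
  have h3 : 2 * (k + 1) + 1 = 2 * k + 3 := by omega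
  have h2 : 2 * (k + 1) - 1 = 2 * k + 1 := by omega
  have h1 : 2 * (k + 1) = 2 * k + 2 := by omega
  rw [h3, h2, h1]
  refine ⟨?_, ?_, ?_⟩
  · have hpi := part_i (β := β) hm hmonic hdeg horth hP0 hP1 hrec lam hlam (k + 1)
    rw [h1] at hpi
    exact hpi
  · exact deriv_ne (β := β) hm hmonic hdeg horth hP0 hP1 hrec lam hlam k
  · exact part_ii (β := β) hm hmonic hdeg horth hP0 hP1 hrec lam hlam k
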